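/- arXiv:2410.22844 — 2 statements merged into one kernel-verified Lean document; each statement's English description precedes it below -/
import Mathlib

section
/- For the Gaussian recommender system trained by gradient descent on the standard loss L(Θ) = −Σ r⟨u, v⟩ with learning rate η, there exists a positive scalar function M(t, η) (depending only on t, η, and the number of users n) such that v_t = M(t, η)·v₀ for every epoch t ≥ 1, where M(1, η) = 1 + nη. -/
/-- For the Gaussian recommender system trained by gradient descent on the standard loss,
there exists a positive scalar function M(t) (for fixed η) with v_t = M(t)·v₀ for all t ≥ 1
and M(1) = 1 + nη. -/
theorem item_embedding_scalar_multiple (d n : ℕ) (hn : 0 < n) (η : ℝ) (hη : 0 < η)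
    (r : Fin n → ℝ) (hr : ∀ i, r i = 1 ∨ r i = -1)
    (u : Fin n → ℕ → (Fin d → ℝ)) (v : ℕ → (Fin d → ℝ))
    (hu : ∀ i t, u i (t + 1) = u i t + η • (r i • v t))
    (hv : ∀ t, v (t + 1) = v t + η • ∑ i, r i • u i t)
    (hv0 : v 0 = ((n : ℝ))⁻¹ • ∑ i, r i • u i 0) :
    ∃ M : ℕ → ℝ, M 1 = 1 + (n : ℝ) * η ∧ ∀ t ≥ 1, 0 < M t ∧ v t = M t • v 0 := by
  set f : ℕ → ℝ × ℝ := fun t =>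
    Nat.rec ((1 : ℝ), (n : ℝ)) (fun _ p => (p.1 + η * p.2, p.2 + η * n * p.1)) t with hf
  have hs0 : (∑ i, r i • u i 0) = (n : ℝ) • v 0 := by
    rw [hv0, smul_smul]
    field_simp
    rw [one_smul]
  have key : ∀ t, v t = (f t).1 • v 0 ∧ (∑ i, r i • u i t) = (f t).2 • v 0 ∧
      0 < (f t).1 ∧ 0 < (f t).2 := by
    intro t
    induction t with
    | zero =>
      refine ⟨by simp [hf], by simpa [hf] using hs0, by norm_num [hf], by
        simpa [hf] using (Nat.cast_pos.mpr hn : (0:ℝ) < n)⟩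
    | succ t ih =>
      obtain ⟨hvt, hst, hA, hB⟩ := ih
      have hsum : (∑ i, r i • u i (t + 1)) = ((f t).2 + η * n * (f t).1) • v 0 := by
        have : ∀ i : Fin n, r i • u i (t + 1) = r i • u i t + η • v t := by
          intro i
          rw [hu i t]
          rcases hr i with h | h <;>
            simp [h, smul_add, smul_smul]
        rw [Finset.sum_congr rfl fun i _ => this i, Finset.sum_add_distrib, hst,
          Finset.sum_const, Finset.card_univ, Fintype.card_fin, hvt]
        match_scalars
        ring
      refine ⟨?_, ?_, ?_, ?_⟩
      · rw [hv t, hst, hvt]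
        show _ = ((f t).1 + η * (f t).2) • v 0
        match_scalars; ring
      · exact hsum
      · exact add_pos hA (mul_pos hη hB)
      · exact add_pos hB (mul_pos (mul_pos hη (Nat.cast_pos.mpr hn)) hA)
  refine ⟨fun t => (f t).1, ?_, fun t _ => ⟨(key t).2.2.1, (key t).1⟩⟩
  show (1 : ℝ) + η * (n : ℝ) = 1 + (n : ℝ) * η
  ring
end

section
/- Under one adversarial gradient step with learning rate η, adversarial weight λ > 0, and perturbation magnitude ε, the user embedding updates as u_{(t+1)} = (1 − ηλε/‖u_{(t)}‖)·u_{(t)} + η(1+λ)·r·v_{(t)}. In particular, if ε < ‖u_{(t)}‖/(ηλ), the coefficient (1 − ηλε/‖u_{(t)}‖) lies strictly in (0, 1), so the factor γ = (1 − ηλε/‖u_{(t)}‖)^{−1} satisfies γ > 1. -/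
/-- One adversarial gradient step with step η, adversarial weight λ, and magnitude ε gives
u_(t+1) = (1 − ηλε/‖u‖)·u + η(1+λ)·r·v; moreover if ε < ‖u‖/(ηλ) then the coefficient lies
strictly in (0,1) and γ = (1 − ηλε/‖u‖)⁻¹ > 1. -/
theorem adversarial_user_update (d : ℕ) (u v : EuclideanSpace ℝ (Fin d)) (hu : u ≠ 0)
    (η lam ε r : ℝ) (hη : 0 < η) (hlam : 0 < lam) (hε : 0 < ε) (hr : r = 1 ∨ r = -1)
    (u' : EuclideanSpace ℝ (Fin d))
    (hupd : u' = u - η • ((-r) • v + lam • ((-r) • (v + (-(ε * r) / ‖u‖) • u)))) :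
    u' = (1 - η * lam * ε / ‖u‖) • u + (η * (1 + lam) * r) • v ∧
      (ε < ‖u‖ / (η * lam) →
        0 < 1 - η * lam * ε / ‖u‖ ∧ 1 - η * lam * ε / ‖u‖ < 1 ∧
          1 < (1 - η * lam * ε / ‖u‖)⁻¹) := by
  have hnu : (0:ℝ) < ‖u‖ := norm_pos_iff.mpr hu
  constructor
  · rw [hupd]
    rcases hr with h | h <;> subst h <;> module
  · intro hlt
    have h1 : η * lam * ε < ‖u‖ := by
      have := (lt_div_iff₀ (mul_pos hη hlam)).mp hlt
      nlinarith
    have h2 : η * lam * ε / ‖u‖ < 1 := (div_lt_one hnu).mpr h1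
    have h3 : 0 < η * lam * ε / ‖u‖ := div_pos (by positivity) hnu
    refine ⟨by linarith, by linarith, ?_⟩
    exact (one_lt_inv₀ (by linarith)).mpr (by linarith)
end
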